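/- Let d : ℕ → A (A = Fin m) satisfy σ^i d ⪯ d for every i ∈ ℕ. Then there exist m' ≥ 1 and an admissible sequence d' : ℕ → Fin m' such that for all n ≥ 1, the number of distinct predecessor sets of words of length n in X_{d'} equals Φ_n(d): |P_{X_{d'}}(n)| = Φ_n(d). -/

import Mathlib

namespace BetaShift

variable {A : Type*}

/-- The shift map: `(shift x) n = x (n+1)`. -/
def shift (x : ℕ → A) : ℕ → A := fun n => x (n + 1)

/-- Lexicographic order on one-sided sequences: `x = y`, or there is an index `i`
such that `x j = y j` for all `j < i` and `x i < y i`. -/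
def SeqLe [LinearOrder A] (x y : ℕ → A) : Prop :=
  x = y ∨ ∃ i, (∀ j, j < i → x j = y j) ∧ x i < y i

/-- A word `w` occurs in the sequence `x`. -/
def Occurs (w : List A) (x : ℕ → A) : Prop :=
  ∃ i : ℕ, ∀ j : Fin w.length, x (i + j) = w.get j

/-- `Complexity x n` is the number `Φ_n(x)` of distinct words of length `n` occurring in `x`. -/
noncomputable def Complexity (x : ℕ → A) (n : ℕ) : ℕ :=
  Set.ncard {w : List A | w.length = n ∧ Occurs w x}

/-- A sequence is eventually periodic if there are `p ≥ 1` and `N` with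
`d (i + p) = d i` for all `i ≥ N`. -/
def EventuallyPeriodic (d : ℕ → A) : Prop :=
  ∃ p, 1 ≤ p ∧ ∃ N, ∀ i, N ≤ i → d (i + p) = d i

/-- `(d)_k`, the `k`-letter prefix of the sequence `d`, as a word. -/
def prefixWord (d : ℕ → A) (k : ℕ) : List A := List.ofFn (fun i : Fin k => d i)

variable {m : ℕ}

/-- `d` is admissible: every shift of `d` is lexicographically ≤ `d`,
and `d` is not eventually `0`. -/
def Admissible (d : ℕ → Fin m) : Prop :=
  (∀ i, SeqLe (shift^[i] d) d) ∧ ∀ N, ∃ i, N ≤ i ∧ (d i).val ≠ 0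

/-- The one-sided β-shift `X_d` determined by the admissible sequence `d`. -/
def XSet (d : ℕ → Fin m) : Set (ℕ → Fin m) :=
  {x | ∀ i, SeqLe (shift^[i] x) d}

/-- The language of `X_d`: all words occurring in some point of `X_d`. -/
def Lang (d : ℕ → Fin m) : Set (List (Fin m)) :=
  {w | ∃ x ∈ XSet d, Occurs w x}

/-- The follower set of the word `w` in `X_d`. -/
def Fol (d : ℕ → Fin m) (w : List (Fin m)) : Set (List (Fin m)) :=
  {u | w ++ u ∈ Lang d}

/-- The predecessor set of the word `w` in `X_d`. -/
def Pred (d : ℕ → Fin m) (w : List (Fin m)) : Set (List (Fin m)) :=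
  {s | s ++ w ∈ Lang d}

/-- The extender set of the word `w` in `X_d`. -/
def Ext (d : ℕ → Fin m) (w : List (Fin m)) : Set (List (Fin m) × List (Fin m)) :=
  {p | p.1 ++ w ++ p.2 ∈ Lang d}

/-- `|F(n)|`: the number of distinct follower sets of words of length `n` in `X_d`. -/
noncomputable def FolCount (d : ℕ → Fin m) (n : ℕ) : ℕ :=
  Set.ncard {S | ∃ w ∈ Lang d, w.length = n ∧ S = Fol d w}

/-- `|P(n)|`: the number of distinct predecessor sets of words of length `n` in `X_d`. -/
noncomputable def PredCount (d : ℕ → Fin m) (n : ℕ) : ℕ :=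
  Set.ncard {S | ∃ w ∈ Lang d, w.length = n ∧ S = Pred d w}

/-- `|E(n)|`: the number of distinct extender sets of words of length `n` in `X_d`. -/
noncomputable def ExtCount (d : ℕ → Fin m) (n : ℕ) : ℕ :=
  Set.ncard {S | ∃ w ∈ Lang d, w.length = n ∧ S = Ext d w}

/-- The largest `k ≤ n` such that the `k`-letter prefix of `d` is a suffix of `v`
(`k = 0`, the empty prefix, always works). -/
def classIndex (d : ℕ → Fin m) (n : ℕ) (v : List (Fin m)) : ℕ :=
  Nat.findGreatest (fun k => prefixWord d k <:+ v) n

/-- Lexicographic comparison of (equal-length) words: `u = v`, or at the first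
index where they differ, `u` takes the smaller value. -/
def WordLe [LinearOrder A] (u v : List A) : Prop :=
  u = v ∨ ∃ i, ∃ (hu : i < u.length) (hv : i < v.length),
    (∀ j (hju : j < u.length) (hjv : j < v.length), j < i → u.get ⟨j, hju⟩ = v.get ⟨j, hjv⟩) ∧
    u.get ⟨i, hu⟩ < v.get ⟨i, hv⟩

end BetaShift

open BetaShift

namespace Stmt11Aux
open BetaShift

lemma shift_iter {A : Type*} (x : ℕ → A) (i j : ℕ) : (shift^[i] x) j = x (i + j) := by
  induction i generalizing x j with
  | zero => simp
  | succ i ih =>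
    rw [Function.iterate_succ_apply, ih]
    show x (i + j + 1) = x (i + 1 + j)
    congr 1; omega

lemma seqle_refl {A : Type*} [LinearOrder A] (x : ℕ → A) : SeqLe x x := Or.inl rfl

lemma seqle_trans {A : Type*} [LinearOrder A] {x y z : ℕ → A}
    (h1 : SeqLe x y) (h2 : SeqLe y z) : SeqLe x z := by
  rcases h1 with rfl | ⟨i, hagr, hlt⟩
  · exact h2
  · rcases h2 with rfl | ⟨i', hagr', hlt'⟩
    · exact Or.inr ⟨i, hagr, hlt⟩
    · rcases lt_trichotomy i i' with h | h | h
      · exact Or.inr ⟨i, fun j hj => (hagr j hj).trans (hagr' j (hj.trans h)),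
          hlt.trans_le (le_of_eq (hagr' i h))⟩
      · subst h
        exact Or.inr ⟨i, fun j hj => (hagr j hj).trans (hagr' j hj), hlt.trans hlt'⟩
      · exact Or.inr ⟨i', fun j hj => (hagr j (hj.trans h)).trans (hagr' j hj),
          (le_of_eq (hagr i' h)).trans_lt hlt'⟩

lemma zero_seqle {m : ℕ} (c : ℕ → Fin (m + 1)) : SeqLe (fun _ => 0) c := by
  by_cases h : ∀ j, c j = 0
  · exact Or.inl (funext fun j => (h j).symm)
  · push_neg at h
    exact Or.inr ⟨Nat.find h, fun j hj => by
      have := Nat.find_min h hj; push_neg at this; exact this.symm,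
      Fin.pos_of_ne_zero (Nat.find_spec h)⟩

def splice {A : Type*} (a : ℕ → A) (t : ℕ) (b : ℕ → A) : ℕ → A :=
  fun j => if j < t then a j else b (j - t)

lemma splice_lt {A : Type*} {a : ℕ → A} {t : ℕ} {b : ℕ → A} {j : ℕ} (h : j < t) :
    splice a t b j = a j := if_pos h

lemma splice_ge {A : Type*} {a : ℕ → A} {t : ℕ} {b : ℕ → A} {j : ℕ} (h : t ≤ j) :
    splice a t b j = b (j - t) := if_neg (by omega)

lemma shift_splice {A : Type*} (a b : ℕ → A) {i t : ℕ} (h : i ≤ t) :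
    shift^[i] (splice a t b) = splice (shift^[i] a) (t - i) b := by
  funext j
  rw [shift_iter]
  by_cases hj : j < t - i
  · rw [splice_lt hj, splice_lt (by omega), shift_iter]
  · rw [splice_ge (by omega), splice_ge (by omega)]
    congr 1; omega

lemma shift_splice_ge {A : Type*} (a b : ℕ → A) {i t : ℕ} (h : t ≤ i) :
    shift^[i] (splice a t b) = shift^[i - t] b := by
  funext j
  rw [shift_iter, shift_iter, splice_ge (by omega)]
  congr 1; omega

lemma lemC {A : Type*} [LinearOrder A] (a b c : ℕ → A) (t : ℕ) :
    SeqLe (splice a t b) c ↔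
      (∃ k, k < t ∧ (∀ j, j < k → a j = c j) ∧ a k < c k) ∨
      ((∀ j, j < t → a j = c j) ∧ SeqLe b (shift^[t] c)) := by
  constructor
  · rintro (heq | ⟨i, hagr, hlt⟩)
    · refine Or.inr ⟨fun j hj => by rw [← congrFun heq j, splice_lt hj], Or.inl ?_⟩
      funext j
      rw [shift_iter, ← congrFun heq (t + j), splice_ge (by omega)]
      congr 1; omega
    · rcases lt_or_ge i t with hit | hit
      · exact Or.inl ⟨i, hit, fun j hj => by rw [← hagr j hj, splice_lt (by omega)],
          by rw [← splice_lt (a := a) (b := b) hit]; exact hlt⟩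
      · refine Or.inr ⟨fun j hj => by rw [← hagr j (by omega), splice_lt hj], Or.inr
          ⟨i - t, fun j hj => ?_, ?_⟩⟩
        · rw [shift_iter, ← hagr (t + j) (by omega), splice_ge (by omega)]
          congr 1; omega
        · have h1 : splice a t b i < c i := hlt
          rw [splice_ge hit] at h1
          rw [shift_iter]
          have : c (t + (i - t)) = c i := by congr 1; omega
          rw [this]; exact h1
  · rintro (⟨k, hkt, hagr, hlt⟩ | ⟨hagr, hb⟩)
    · exact Or.inr ⟨k, fun j hj => by rw [splice_lt (by omega)]; exact hagr j hj,
        by rw [splice_lt hkt]; exact hlt⟩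
    · rcases hb with heq | ⟨i, hagr2, hlt2⟩
      · refine Or.inl (funext fun j => ?_)
        rcases lt_or_ge j t with hj | hj
        · rw [splice_lt hj]; exact hagr j hj
        · rw [splice_ge hj, congrFun heq (j - t), shift_iter]
          congr 1; omega
      · refine Or.inr ⟨t + i, fun j hj => ?_, ?_⟩
        · rcases lt_or_ge j t with hj2 | hj2
          · rw [splice_lt hj2]; exact hagr j hj2
          · rw [splice_ge hj2]
            have := hagr2 (j - t) (by omega)
            rw [shift_iter] at this
            rw [this]; congr 1; omega
        · rw [splice_ge (by omega)]
          have := hlt2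
          rw [shift_iter] at this
          have h2 : t + i - t = i := by omega
          rw [h2]; exact this

def embed {m : ℕ} (w : List (Fin (m + 1))) : ℕ → Fin (m + 1) :=
  fun j => if h : j < w.length then w.get ⟨j, h⟩ else 0

lemma embed_lt {m : ℕ} (w : List (Fin (m + 1))) {j : ℕ} (h : j < w.length) :
    embed w j = w.get ⟨j, h⟩ := dif_pos h

lemma embed_ge {m : ℕ} (w : List (Fin (m + 1))) {j : ℕ} (h : w.length ≤ j) :
    embed w j = 0 := dif_neg (by omega)

lemma embed_eq_splice {m : ℕ} (w : List (Fin (m + 1))) :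
    embed w = splice (embed w) w.length (fun _ => 0) := by
  funext j
  rcases lt_or_ge j w.length with h | h
  · rw [splice_lt h]
  · rw [splice_ge h, embed_ge _ h]

lemma embed_append {m : ℕ} (s w : List (Fin (m + 1))) :
    embed (s ++ w) = splice (embed s) s.length (embed w) := by
  funext j
  rcases lt_or_ge j s.length with h | h
  · rw [splice_lt h, embed_lt _ (by simp; omega), embed_lt _ h]
    simp [List.get_eq_getElem, List.getElem_append_left h]
  · rw [splice_ge h]
    rcases lt_or_ge j (s.length + w.length) with h2 | h2
    · rw [embed_lt _ (by simp; omega), embed_lt _ (by omega)]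
      simp only [List.get_eq_getElem]
      rw [List.getElem_append_right h]
    · rw [embed_ge _ (by simp; omega), embed_ge _ (by omega)]

lemma seqle_splice_zero {m : ℕ} {x c : ℕ → Fin (m + 1)} (h : SeqLe x c) (r : ℕ) :
    SeqLe (splice x r (fun _ => 0)) c := by
  rw [lemC]
  rcases h with heq | ⟨i, hagr, hlt⟩
  · exact Or.inr ⟨fun j _ => congrFun heq j, zero_seqle _⟩
  · rcases lt_or_ge i r with h' | h'
    · exact Or.inl ⟨i, h', hagr, hlt⟩
    · exact Or.inr ⟨fun j hj => hagr j (by omega), zero_seqle _⟩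

lemma mem_lang_iff {m : ℕ} {d : ℕ → Fin (m + 1)} {w : List (Fin (m + 1))} :
    w ∈ Lang d ↔ embed w ∈ XSet d := by
  constructor
  · rintro ⟨x, hx, i₀, hocc⟩
    intro i
    rcases le_or_gt w.length i with hi | hi
    · have hz : shift^[i] (embed w) = fun _ => 0 := by
        funext j; rw [shift_iter]; exact embed_ge _ (by omega)
      rw [hz]; exact zero_seqle d
    · have key : shift^[i] (embed w) = splice (shift^[i₀ + i] x) (w.length - i) (fun _ => 0) := by
        funext j
        rw [shift_iter]
        rcases lt_or_ge j (w.length - i) with hj | hj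
        · rw [splice_lt hj, shift_iter, embed_lt _ (show i + j < w.length by omega)]
          have := hocc ⟨i + j, by omega⟩
          simp only at this
          rw [← this]; congr 1; omega
        · rw [splice_ge hj, embed_ge _ (by omega)]
      rw [key]
      exact seqle_splice_zero (hx (i₀ + i)) _
  · intro hx
    exact ⟨embed w, hx, 0, fun j => by
      rw [show ((0 : ℕ) + (j : ℕ)) = (j : ℕ) by omega, embed_lt _ j.isLt]⟩

def wle {A : Type*} [LinearOrder A] (u v : ℕ → A) (n : ℕ) : Prop :=
  (∀ j, j < n → u j = v j) ∨ ∃ i, i < n ∧ (∀ j, j < i → u j = v j) ∧ u i < v i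

lemma wle_refl {A : Type*} [LinearOrder A] (u : ℕ → A) (n : ℕ) : wle u u n :=
  Or.inl fun _ _ => rfl

lemma wle_trans {A : Type*} [LinearOrder A] {u v x : ℕ → A} {n : ℕ}
    (h1 : wle u v n) (h2 : wle v x n) : wle u x n := by
  rcases h1 with hagr | ⟨i, hin, hagr, hlt⟩
  · rcases h2 with hagr' | ⟨i, hin, hagr', hlt⟩
    · exact Or.inl fun j hj => (hagr j hj).trans (hagr' j hj)
    · exact Or.inr ⟨i, hin, fun j hj => (hagr j (by omega)).trans (hagr' j hj),
        (le_of_eq (hagr i hin)).trans_lt hlt⟩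
  · rcases h2 with hagr' | ⟨i', hin', hagr'', hlt'⟩
    · exact Or.inr ⟨i, hin, fun j hj => (hagr j hj).trans (hagr' j (by omega)), hlt.trans_le
        (le_of_eq (hagr' i hin))⟩
    · rcases lt_trichotomy i i' with h | h | h
      · exact Or.inr ⟨i, hin, fun j hj => (hagr j hj).trans (hagr'' j (by omega)),
          hlt.trans_le (le_of_eq (hagr'' i h))⟩
      · subst h
        exact Or.inr ⟨i, hin, fun j hj => (hagr j hj).trans (hagr'' j hj), hlt.trans hlt'⟩
      · exact Or.inr ⟨i', hin', fun j hj => (hagr j (by omega)).trans (hagr'' j hj),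
          (le_of_eq (hagr i' h)).trans_lt hlt'⟩

lemma wle_antisymm {A : Type*} [LinearOrder A] {u v : ℕ → A} {n : ℕ}
    (h1 : wle u v n) (h2 : wle v u n) : ∀ j, j < n → u j = v j := by
  rcases h1 with hagr | ⟨i, hin, hagr, hlt⟩
  · exact hagr
  · rcases h2 with hagr' | ⟨i', hin', hagr'', hlt'⟩
    · exact absurd (hagr' i hin) hlt.ne'
    · rcases lt_trichotomy i i' with h | h | h
      · exact absurd (hagr'' i h).symm hlt.ne
      · subst h; exact absurd hlt' (not_lt.2 (le_of_lt hlt))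
      · exact absurd (hagr i' h) hlt'.ne'

lemma wle_congr {A : Type*} [LinearOrder A] {u u' v v' : ℕ → A} {n : ℕ}
    (hu : ∀ j, j < n → u j = u' j) (hv : ∀ j, j < n → v j = v' j) :
    wle u v n ↔ wle u' v' n := by
  have key : ∀ (a a' b b' : ℕ → A), (∀ j, j < n → a j = a' j) → (∀ j, j < n → b j = b' j) →
      wle a b n → wle a' b' n := by
    rintro a a' b b' ha hb (hagr | ⟨i, hin, hagr, hlt⟩)
    · exact Or.inl fun j hj => (ha j hj).symm.trans ((hagr j hj).trans (hb j hj))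
    · exact Or.inr ⟨i, hin, fun j hj => (ha j (by omega)).symm.trans ((hagr j hj).trans
        (hb j (by omega))), (ha i hin) ▸ (hb i hin) ▸ hlt⟩
  exact ⟨key u u' v v' hu hv, key u' u v' v (fun j hj => (hu j hj).symm)
    (fun j hj => (hv j hj).symm)⟩

lemma seqle_embed_iff_wle {m : ℕ} (w : List (Fin (m + 1))) (c : ℕ → Fin (m + 1)) :
    SeqLe (embed w) c ↔ wle (embed w) c w.length := by
  conv_lhs => rw [embed_eq_splice w]
  rw [lemC]
  constructor
  · rintro (⟨k, h1, h2, h3⟩ | ⟨h, _⟩)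
    · exact Or.inr ⟨k, h1, h2, h3⟩
    · exact Or.inl h
  · rintro (h | ⟨k, h1, h2, h3⟩)
    · exact Or.inr ⟨h, zero_seqle _⟩
    · exact Or.inl ⟨k, h1, h2, h3⟩

lemma seqle_wle {A : Type*} [LinearOrder A] {x y : ℕ → A} (h : SeqLe x y) (n : ℕ) :
    wle x y n := by
  rcases h with rfl | ⟨i, hagr, hlt⟩
  · exact wle_refl x n
  · rcases lt_or_ge i n with hi | hi
    · exact Or.inr ⟨i, hi, hagr, hlt⟩
    · exact Or.inl fun j hj => hagr j (by omega)

lemma exists_min {m : ℕ} (n : ℕ) (g : ℕ → ℕ → Fin (m + 1)) (T : Set ℕ) (hT : T.Nonempty) :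
    ∃ t₀ ∈ T, ∀ t ∈ T, wle (g t₀) (g t) n := by
  induction n generalizing g T with
  | zero =>
    obtain ⟨t, ht⟩ := hT
    exact ⟨t, ht, fun t' _ => Or.inl fun j hj => absurd hj (Nat.not_lt_zero j)⟩
  | succ n ih =>
    obtain ⟨t₁, ht₁⟩ := hT
    obtain ⟨c, ⟨t₂, ht₂, hc⟩, hmin⟩ :=
      (wellFounded_lt (α := Fin (m + 1))).has_min {a | ∃ t ∈ T, g t 0 = a} ⟨g t₁ 0, t₁, ht₁, rfl⟩
    obtain ⟨t₀, ht₀, hmin'⟩ := ih (fun t j => g t (j + 1)) {t | t ∈ T ∧ g t 0 = c} ⟨t₂, ht₂, hc⟩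
    refine ⟨t₀, ht₀.1, fun t ht => ?_⟩
    by_cases h : g t 0 = c
    · have hw := hmin' t ⟨ht, h⟩
      have h0 : g t₀ 0 = g t 0 := ht₀.2.trans h.symm
      rcases hw with hagr | ⟨i, hin, hagr, hlt⟩
      · refine Or.inl fun j hj => ?_
        match j with
        | 0 => exact h0
        | j + 1 => exact hagr j (by omega)
      · refine Or.inr ⟨i + 1, by omega, fun j hj => ?_, hlt⟩
        match j with
        | 0 => exact h0
        | j + 1 => exact hagr j (by omega)
    · refine Or.inr ⟨0, by omega, fun j hj => absurd hj (by omega), ?_⟩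
      rw [ht₀.2]
      exact lt_of_le_of_ne (not_lt.1 (hmin _ ⟨t, ht, rfl⟩)) (fun hcc => h hcc.symm)

section Main

variable {m : ℕ} {d : ℕ → Fin (m + 1)}

lemma d_mem_XSet (hd : ∀ i, SeqLe (shift^[i] d) d) : d ∈ XSet d := hd

def fac (d : ℕ → Fin (m + 1)) (n t : ℕ) : List (Fin (m + 1)) :=
  List.ofFn fun j : Fin n => d (t + j)

lemma fac_length (n t : ℕ) : (fac d n t).length = n := List.length_ofFn

lemma embed_fac {n t j : ℕ} (hj : j < n) : embed (fac d n t) j = d (t + j) := by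
  rw [embed_lt _ (by rw [fac_length]; exact hj)]
  simp [fac, List.get_ofFn]

lemma fac_occurs (n t : ℕ) : Occurs (fac d n t) d :=
  ⟨t, fun j => by rw [List.get_eq_getElem]; simp [fac, List.getElem_ofFn]⟩

lemma fac_mem_lang (hd : ∀ i, SeqLe (shift^[i] d) d) (n t : ℕ) : fac d n t ∈ Lang d :=
  ⟨d, d_mem_XSet hd, fac_occurs n t⟩

lemma occurs_eq_fac {w : List (Fin (m + 1))} {n : ℕ} (hlen : w.length = n) (hocc : Occurs w d) :
    ∃ t, w = fac d n t := by
  obtain ⟨i, hocc⟩ := hocc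
  refine ⟨i, List.ext_get (by rw [hlen, fac_length]) fun k h1 h2 => ?_⟩
  have := hocc ⟨k, h1⟩
  simp only at this
  rw [← this]
  simp [fac, List.get_ofFn]

lemma mem_pred_iff (hd : ∀ i, SeqLe (shift^[i] d) d) {w : List (Fin (m + 1))}
    (hw : w ∈ Lang d) (s : List (Fin (m + 1))) :
    s ∈ Pred d w ↔ ∀ i, i < s.length →
      (∃ k, k < s.length - i ∧ (∀ j, j < k → embed s (i + j) = d j) ∧ embed s (i + k) < d k)
      ∨ ((∀ j, j < s.length - i → embed s (i + j) = d j) ∧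
          SeqLe (embed w) (shift^[s.length - i] d)) := by
  have hw' : embed w ∈ XSet d := mem_lang_iff.1 hw
  show s ++ w ∈ Lang d ↔ _
  rw [mem_lang_iff]
  constructor
  · intro h i hi
    have h2 := h i
    rw [embed_append, shift_splice _ _ (le_of_lt hi), lemC] at h2
    rcases h2 with ⟨k, hk, hagr, hlt⟩ | ⟨hagr, hle⟩
    · refine Or.inl ⟨k, hk, fun j hj => ?_, ?_⟩
      · have := hagr j hj; rwa [shift_iter] at this
      · rwa [shift_iter] at hlt
    · refine Or.inr ⟨fun j hj => ?_, hle⟩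
      have := hagr j hj; rwa [shift_iter] at this
  · intro h i
    rw [embed_append]
    rcases lt_or_ge i s.length with hi | hi
    · rw [shift_splice _ _ hi.le, lemC]
      rcases h i hi with ⟨k, hk, hagr, hlt⟩ | ⟨hagr, hle⟩
      · exact Or.inl ⟨k, hk, fun j hj => by rw [shift_iter]; exact hagr j hj,
          by rw [shift_iter]; exact hlt⟩
      · exact Or.inr ⟨fun j hj => by rw [shift_iter]; exact hagr j hj, hle⟩
    · rw [shift_splice_ge _ _ hi]
      exact hw' _

lemma pred_ext (hd : ∀ i, SeqLe (shift^[i] d) d) {w w' : List (Fin (m + 1))}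
    (hw : w ∈ Lang d) (hw' : w' ∈ Lang d)
    (hG : ∀ t, SeqLe (embed w) (shift^[t] d) ↔ SeqLe (embed w') (shift^[t] d)) :
    Pred d w = Pred d w' := by
  ext s
  rw [mem_pred_iff hd hw, mem_pred_iff hd hw']
  constructor <;> intro h i hi <;> rcases h i hi with h2 | ⟨h3, h4⟩
  · exact Or.inl h2
  · exact Or.inr ⟨h3, (hG _).1 h4⟩
  · exact Or.inl h2
  · exact Or.inr ⟨h3, (hG _).2 h4⟩

lemma prefix_length (t : ℕ) : (prefixWord d t).length = t := List.length_ofFn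

lemma embed_prefix {t j : ℕ} (hj : j < t) : embed (prefixWord d t) j = d j := by
  rw [embed_lt _ (by rw [prefix_length]; exact hj)]
  simp [prefixWord, List.get_ofFn]

lemma seqle_embed_w_zero (hw : ∀ i, SeqLe (shift^[i] (embed w)) d) :
    SeqLe (embed w) d := by
  have := hw 0
  rwa [Function.iterate_zero_apply] at this

lemma prefix_mem_pred_iff (hd : ∀ i, SeqLe (shift^[i] d) d) {w : List (Fin (m + 1))}
    (hw : w ∈ Lang d) (t : ℕ) :
    prefixWord d t ∈ Pred d w ↔ SeqLe (embed w) (shift^[t] d) := by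
  rw [mem_pred_iff hd hw]
  simp only [prefix_length]
  constructor
  · intro h
    rcases Nat.eq_zero_or_pos t with rfl | ht
    · have h2 := mem_lang_iff.1 hw 0
      rw [Function.iterate_zero_apply] at h2
      rw [Function.iterate_zero_apply]
      exact h2
    · rcases h 0 ht with ⟨k, hk, hagr, hlt⟩ | ⟨_, h2⟩
      · rw [show (0 + k) = k by omega, embed_prefix (show k < t by omega)] at hlt
        exact absurd hlt (lt_irrefl _)
      · rwa [Nat.sub_zero] at h2
  · intro hG i hi
    rcases hd i with heq | ⟨k, hagr, hlt⟩
    · refine Or.inr ⟨fun j hj => ?_, ?_⟩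
      · rw [embed_prefix (show i + j < t by omega)]
        have := congrFun heq j
        rwa [shift_iter] at this
      · have h1 : shift^[t - i] (shift^[i] d) = shift^[t - i] d := by rw [heq]
        rw [← Function.iterate_add_apply, show t - i + i = t by omega] at h1
        rw [← h1]; exact hG
    · rcases lt_or_ge k (t - i) with hk | hk
      · refine Or.inl ⟨k, hk, fun j hj => ?_, ?_⟩
        · rw [embed_prefix (show i + j < t by omega)]
          have := hagr j hj
          rwa [shift_iter] at this
        · rw [embed_prefix (show i + k < t by omega)]
          have := hlt
          rwa [shift_iter] at this
      · refine Or.inr ⟨fun j hj => ?_, ?_⟩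
        · rw [embed_prefix (show i + j < t by omega)]
          have := hagr j (by omega)
          rwa [shift_iter] at this
        · refine seqle_trans hG (Or.inr ⟨k - (t - i), fun j hj => ?_, ?_⟩)
          · rw [shift_iter, shift_iter]
            have := hagr (t - i + j) (by omega)
            rw [shift_iter] at this
            calc d (t + j) = d (i + (t - i + j)) := by congr 1; omega
              _ = d (t - i + j) := this
          · rw [shift_iter, shift_iter]
            have h1 : d (i + k) < d k := by have := hlt; rwa [shift_iter] at this
            calc d (t + (k - (t - i))) = d (i + k) := by congr 1; omega
              _ < d k := h1
              _ = d (t - i + (k - (t - i))) := by congr 1; omega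

lemma G_fac_iff (n t₀ t : ℕ) :
    SeqLe (embed (fac d n t₀)) (shift^[t] d) ↔ wle (shift^[t₀] d) (shift^[t] d) n := by
  rw [seqle_embed_iff_wle, fac_length]
  exact wle_congr (fun j hj => by rw [embed_fac hj, shift_iter]) (fun _ _ => rfl)

lemma pred_fac_eq (hd : ∀ i, SeqLe (shift^[i] d) d) {w : List (Fin (m + 1))} {n : ℕ}
    (hw : w ∈ Lang d) (hwn : w.length = n) :
    ∃ t₀, Pred d w = Pred d (fac d n t₀) := by
  have h0 : SeqLe (embed w) (shift^[0] d) := by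
    rw [Function.iterate_zero_apply]
    exact seqle_embed_w_zero (mem_lang_iff.1 hw)
  obtain ⟨t₀, ht₀, hmin⟩ := exists_min n (fun t => shift^[t] d)
    {t | SeqLe (embed w) (shift^[t] d)} ⟨0, h0⟩
  refine ⟨t₀, pred_ext hd hw (fac_mem_lang hd n t₀) fun t => ?_⟩
  rw [G_fac_iff]
  constructor
  · intro h
    exact hmin t h
  · intro h
    have h1 : wle (embed w) (shift^[t₀] d) w.length := (seqle_embed_iff_wle _ _).1 ht₀
    rw [hwn] at h1
    have h2 : wle (embed w) (shift^[t] d) w.length := by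
      rw [hwn]; exact wle_trans h1 h
    exact (seqle_embed_iff_wle _ _).2 h2

lemma pred_injOn (hd : ∀ i, SeqLe (shift^[i] d) d) (n : ℕ) :
    Set.InjOn (Pred d) {w | w.length = n ∧ Occurs w d} := by
  rintro v hv v' hv' hpred
  obtain ⟨t₁, rfl⟩ := occurs_eq_fac hv.1 hv.2
  obtain ⟨t₂, rfl⟩ := occurs_eq_fac hv'.1 hv'.2
  have hself : ∀ t : ℕ, SeqLe (embed (fac d n t)) (shift^[t] d) := fun t =>
    (G_fac_iff n t t).2 (wle_refl _ _)
  have h1 : prefixWord d t₁ ∈ Pred d (fac d n t₂) := by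
    rw [← hpred]
    exact (prefix_mem_pred_iff hd (fac_mem_lang hd n t₁) t₁).2 (hself t₁)
  have h2 : prefixWord d t₂ ∈ Pred d (fac d n t₁) := by
    rw [hpred]
    exact (prefix_mem_pred_iff hd (fac_mem_lang hd n t₂) t₂).2 (hself t₂)
  have g1 := (G_fac_iff n t₂ t₁).1 ((prefix_mem_pred_iff hd (fac_mem_lang hd n t₂) t₁).1 h1)
  have g2 := (G_fac_iff n t₁ t₂).1 ((prefix_mem_pred_iff hd (fac_mem_lang hd n t₁) t₂).1 h2)
  have hagr := wle_antisymm g2 g1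
  unfold fac
  congr 1
  funext j
  have := hagr j j.isLt
  rwa [shift_iter, shift_iter] at this

lemma predcount_eq_complexity (hd : ∀ i, SeqLe (shift^[i] d) d) (n : ℕ) :
    PredCount d n = Complexity d n := by
  have himg : {S | ∃ w ∈ Lang d, w.length = n ∧ S = Pred d w} =
      Pred d '' {w | w.length = n ∧ Occurs w d} := by
    ext S
    constructor
    · rintro ⟨w, hw, hwn, rfl⟩
      obtain ⟨t₀, hpe⟩ := pred_fac_eq hd hw hwn
      exact ⟨fac d n t₀, ⟨fac_length n t₀, fac_occurs n t₀⟩, hpe.symm⟩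
    · rintro ⟨w, ⟨hwn, hocc⟩, rfl⟩
      exact ⟨w, ⟨d, d_mem_XSet hd, hocc⟩, hwn, rfl⟩
  unfold PredCount Complexity
  rw [himg, Set.ncard_image_of_injOn (pred_injOn hd n)]

end Main

lemma complexity_relabel {m : ℕ} (d : ℕ → Fin m) (n : ℕ) :
    Complexity (fun i => Fin.succ (d i)) n = Complexity d n := by
  unfold Complexity
  have himg : {w : List (Fin (m + 1)) | w.length = n ∧ Occurs w (fun i => Fin.succ (d i))} =
      (List.map Fin.succ) '' {w : List (Fin m) | w.length = n ∧ Occurs w d} := by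
    ext w'
    constructor
    · rintro ⟨hlen, i, hocc⟩
      refine ⟨List.ofFn (fun j : Fin n => d (i + j)), ⟨by simp, ⟨i, fun j => ?_⟩⟩, ?_⟩
      · simp [List.get_ofFn]
      · refine (List.ext_get (by simp [hlen]) fun k h1 h2 => ?_).symm
        have := hocc ⟨k, h1⟩
        simp only at this
        rw [← this]
        simp [List.get_eq_getElem, List.getElem_map, List.getElem_ofFn]
    · rintro ⟨w, ⟨hlen, i, hocc⟩, rfl⟩
      refine ⟨by simp [hlen], i, fun j => ?_⟩
      have hj : (j : ℕ) < w.length := by have := j.isLt; simpa using this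
      have := hocc ⟨j, hj⟩
      simp only at this
      rw [List.get_eq_getElem] at this
      simp only [List.get_eq_getElem, List.getElem_map]
      rw [this]
  rw [himg]
  exact Set.ncard_image_of_injOn
    ((List.map_injective_iff.2 (Fin.succ_injective m)).injOn)

end Stmt11Aux

/-- any complexity sequence of a sequence all of whose shifts are ⪯
itself is the predecessor set sequence of some β-shift. -/
theorem stmt11 (m : ℕ) (hm : 1 ≤ m) (d : ℕ → Fin m)
    (hshift : ∀ i : ℕ, SeqLe (shift^[i] d) d) :
    ∃ m' : ℕ, 1 ≤ m' ∧ ∃ d' : ℕ → Fin m', Admissible d' ∧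
      ∀ n, 1 ≤ n → PredCount d' n = Complexity d n := by
  classical
  have hd' : ∀ i : ℕ, SeqLe (shift^[i] (fun k => Fin.succ (d k))) (fun k => Fin.succ (d k)) := by
    intro i
    have hc : shift^[i] (fun k => Fin.succ (d k)) = fun k => Fin.succ ((shift^[i] d) k) := by
      funext k
      rw [Stmt11Aux.shift_iter, Stmt11Aux.shift_iter]
    rw [hc]
    rcases hshift i with heq | ⟨k, hagr, hlt⟩
    · exact Or.inl (by rw [heq])
    · refine Or.inr ⟨k, fun j hj => ?_, Fin.succ_lt_succ_iff.2 hlt⟩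
      show (shift^[i] d j).succ = (d j).succ
      rw [hagr j hj]
  refine ⟨m + 1, by omega, fun k => Fin.succ (d k), ⟨hd', fun N => ⟨N, le_refl N, by simp⟩⟩, ?_⟩
  intro n hn
  rw [Stmt11Aux.predcount_eq_complexity hd' n, Stmt11Aux.complexity_relabel d n]
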